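/- Let X_1, ..., X_n be discrete, independent random variables with E[X_i] = 0 and |X_i| ≤ C, Y = Σ X_i, σ = sqrt(Var(Y)), and 0 < δ < 1. If σ/C ≥ (1/e)·sqrt(2e·ln(2/δ)), then with λ = sqrt(2e·ln(2/δ)) we have P(|Y| ≥ λσ) ≤ δ. -/

import Mathlib

open MeasureTheory ProbabilityTheory Real


lemma key_exp_quad (c : ℝ) (hc : 0 ≤ c) (u : ℝ) (hu : u ≤ c) :
    exp u ≤ 1 + u + u ^ 2 * exp c / 2 := by
  set f : ℝ → ℝ := fun u => 1 + u + u ^ 2 * exp c / 2 - exp u with hf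
  have hderiv : ∀ x : ℝ, HasDerivAt f (1 + x * exp c - exp x) x := by
    intro x
    have h1 : HasDerivAt (fun u : ℝ => u ^ 2) (2 * x) x := by
      simpa using hasDerivAt_pow 2 x
    have h2 : HasDerivAt (fun u : ℝ => u ^ 2 * exp c / 2) (x * exp c) x := by
      have := (h1.mul_const (exp c)).div_const 2
      exact this.congr_deriv (by ring)
    have h3 : HasDerivAt (fun u : ℝ => 1 + u + u ^ 2 * exp c / 2) (1 + x * exp c) x := by
      have := ((hasDerivAt_const x (1:ℝ)).add (hasDerivAt_id x)).add h2
      exact this.congr_deriv (by ring)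
    exact h3.sub (Real.hasDerivAt_exp x)
  have hgoal : 0 ≤ f u := by
    rcases le_or_gt 0 u with h0 | h0
    · -- monotone on [0, c]
      have hmono : MonotoneOn f (Set.Icc 0 c) := by
        refine monotoneOn_of_deriv_nonneg (convex_Icc 0 c)
          (fun x _ => ((hderiv x).continuousAt).continuousWithinAt)
          (fun x hx => ((hderiv x).differentiableAt).differentiableWithinAt) ?_
        intro x hx
        rw [(hderiv x).deriv]
        rw [interior_Icc] at hx
        have hx0 : 0 ≤ x := hx.1.le
        have hxc : x ≤ c := hx.2.le
        have hmul : exp x * exp (-x) = 1 := by rw [← exp_add]; simp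
        have hstep : exp x * (-x + 1) ≤ exp x * exp (-x) :=
          mul_le_mul_of_nonneg_left (add_one_le_exp (-x)) (exp_pos x).le
        have h4 : exp x ≤ 1 + x * exp x := by nlinarith
        have h5 : x * exp x ≤ x * exp c := by
          exact mul_le_mul_of_nonneg_left (exp_le_exp.2 hxc) hx0
        linarith
      have h00 : f 0 = 0 := by simp [hf]
      have := hmono (Set.mem_Icc.2 ⟨le_refl 0, hc⟩) (Set.mem_Icc.2 ⟨h0, hu⟩) h0
      linarith
    · -- antitone on (-∞, 0]
      have hanti : AntitoneOn f (Set.Iic 0) := by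
        refine antitoneOn_of_deriv_nonpos (convex_Iic 0)
          (fun x _ => ((hderiv x).continuousAt).continuousWithinAt)
          (fun x hx => ((hderiv x).differentiableAt).differentiableWithinAt) ?_
        intro x hx
        rw [(hderiv x).deriv]
        rw [interior_Iic] at hx
        have hx0 : x < 0 := hx
        have h4 : x + 1 ≤ exp x := add_one_le_exp x
        have h5 : x * exp c ≤ x := by
          nlinarith [one_le_exp hc]
        linarith
      have h00 : f 0 = 0 := by simp [hf]
      have := hanti (Set.mem_Iic.2 h0.le) (Set.mem_Iic.2 (le_refl 0)) h0.le
      linarith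
  simp only [hf] at hgoal
  linarith

lemma my_exp_integrable {Ω : Type*} [MeasurableSpace Ω] (μ : Measure Ω) [IsProbabilityMeasure μ]
    (X : Ω → ℝ) (hX : Measurable X) (C : ℝ) (hbd : ∀ᵐ ω ∂μ, |X ω| ≤ C) (s : ℝ) :
    Integrable (fun ω => exp (s * X ω)) μ := by
  refine Integrable.mono' (integrable_const (exp (|s| * C))) ((hX.const_mul s).exp).aestronglyMeasurable ?_
  filter_upwards [hbd] with ω h
  rw [Real.norm_eq_abs, abs_of_pos (exp_pos _)]
  apply exp_le_exp.2
  calc s * X ω ≤ |s * X ω| := le_abs_self _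
    _ = |s| * |X ω| := abs_mul s (X ω)
    _ ≤ |s| * C := by
        rcases abs_nonneg s with h'
        exact mul_le_mul_of_nonneg_left h (abs_nonneg s)

lemma my_mgf_bound {Ω : Type*} [MeasurableSpace Ω] (μ : Measure Ω) [IsProbabilityMeasure μ]
    (X : Ω → ℝ) (hX : Measurable X) (C : ℝ) (hC : 0 < C) (hbd : ∀ᵐ ω ∂μ, |X ω| ≤ C)
    (hmean : ∫ ω, X ω ∂μ = 0) (s : ℝ) (hs : |s| * C ≤ 1) :
    mgf X μ s ≤ exp (s ^ 2 * exp 1 * (∫ ω, X ω ^ 2 ∂μ) / 2) := by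
  have hXint : Integrable X μ := by
    refine Integrable.mono' (integrable_const C) hX.aestronglyMeasurable ?_
    filter_upwards [hbd] with ω h
    rwa [Real.norm_eq_abs]
  have hX2int : Integrable (fun ω => X ω ^ 2) μ := by
    refine Integrable.mono' (integrable_const (C ^ 2)) (hX.pow_const 2).aestronglyMeasurable ?_
    filter_upwards [hbd] with ω h
    rw [Real.norm_eq_abs, abs_pow]
    exact pow_le_pow_left₀ (abs_nonneg _) h 2
  have hexpint : Integrable (fun ω => exp (s * X ω)) μ := by
    refine Integrable.mono' (integrable_const (exp (|s| * C)))
      ((hX.const_mul s).exp).aestronglyMeasurable ?_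
    filter_upwards [hbd] with ω h
    rw [Real.norm_eq_abs, abs_of_pos (exp_pos _)]
    apply exp_le_exp.2
    calc s * X ω ≤ |s * X ω| := le_abs_self _
      _ = |s| * |X ω| := abs_mul s (X ω)
      _ ≤ |s| * C := mul_le_mul_of_nonneg_left h (abs_nonneg s)
  have hpt : ∀ᵐ ω ∂μ, exp (s * X ω) ≤ 1 + s * X ω + (s ^ 2 * exp 1 / 2) * X ω ^ 2 := by
    filter_upwards [hbd] with ω h
    have h1 : s * X ω ≤ |s| * C := by
      calc s * X ω ≤ |s * X ω| := le_abs_self _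
        _ = |s| * |X ω| := abs_mul s (X ω)
        _ ≤ |s| * C := mul_le_mul_of_nonneg_left h (abs_nonneg s)
    have h2 := key_exp_quad (|s| * C) (mul_nonneg (abs_nonneg s) hC.le) _ h1
    have h3 : exp (|s| * C) ≤ exp 1 := exp_le_exp.2 hs
    have h4 : (s * X ω) ^ 2 = s ^ 2 * X ω ^ 2 := by ring
    nlinarith [sq_nonneg (s * X ω), sq_nonneg (X ω), sq_nonneg s,
      mul_nonneg (mul_nonneg (sq_nonneg s) (sq_nonneg (X ω))) (exp_pos 1).le]
  have hint2 : Integrable (fun ω => 1 + s * X ω + (s ^ 2 * exp 1 / 2) * X ω ^ 2) μ :=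
    ((integrable_const 1).add (hXint.const_mul s)).add (hX2int.const_mul _)
  calc mgf X μ s = ∫ ω, exp (s * X ω) ∂μ := rfl
    _ ≤ ∫ ω, (1 + s * X ω + (s ^ 2 * exp 1 / 2) * X ω ^ 2) ∂μ :=
        integral_mono_ae hexpint hint2 hpt
    _ = 1 + s * (∫ ω, X ω ∂μ) + (s ^ 2 * exp 1 / 2) * ∫ ω, X ω ^ 2 ∂μ := by
        have e1 : (∫ ω, (1 + s * X ω + (s ^ 2 * exp 1 / 2) * X ω ^ 2) ∂μ)
            = (∫ ω, (1 + s * X ω) ∂μ) + ∫ ω, (s ^ 2 * exp 1 / 2) * X ω ^ 2 ∂μ :=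
          integral_add ((integrable_const 1).add (hXint.const_mul s)) (hX2int.const_mul _)
        have e2 : (∫ ω, (1 + s * X ω) ∂μ) = (∫ _ω, (1:ℝ) ∂μ) + ∫ ω, s * X ω ∂μ :=
          integral_add (integrable_const 1) (hXint.const_mul s)
        rw [e1, e2, integral_const, integral_const_mul, integral_const_mul]
        simp
    _ = 1 + (s ^ 2 * exp 1 * (∫ ω, X ω ^ 2 ∂μ) / 2) := by rw [hmean]; ring
    _ ≤ exp (s ^ 2 * exp 1 * (∫ ω, X ω ^ 2 ∂μ) / 2) := by
        have := add_one_le_exp (s ^ 2 * exp 1 * (∫ ω, X ω ^ 2 ∂μ) / 2)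
        linarith


theorem stmt8 {Ω : Type*} [MeasurableSpace Ω] (μ : Measure Ω) [IsProbabilityMeasure μ]
    (n : ℕ) (X : Fin n → Ω → ℝ) (hmeas : ∀ i, Measurable (X i))
    (hfin : ∀ i, (Set.range (X i)).Finite)
    (hindep : iIndepFun X μ)
    (C : ℝ) (hC : 0 < C) (hbd : ∀ i, ∀ᵐ ω ∂μ, |X i ω| ≤ C)
    (hmean : ∀ i, ∫ ω, X i ω ∂μ = 0)
    (Y : Ω → ℝ) (hY : Y = fun ω => ∑ i, X i ω)
    (σ : ℝ) (hσ : σ = Real.sqrt (∑ i, ∫ ω, (X i ω) ^ 2 ∂μ))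
    (δ : ℝ) (hδ0 : 0 < δ) (hδ1 : δ < 1)
    (hcase : (1 / Real.exp 1) * Real.sqrt (2 * Real.exp 1 * Real.log (2 / δ)) ≤ σ / C)
    (lam : ℝ) (hlam : lam = Real.sqrt (2 * Real.exp 1 * Real.log (2 / δ))) :
    (μ {ω | lam * σ ≤ |Y ω|}).toReal ≤ δ := by
  set L := Real.log (2 / δ) with hLdef
  have hL : 0 < L := Real.log_pos (by rw [lt_div_iff₀ hδ0]; linarith)
  have hlam0 : 0 < lam := by
    rw [hlam]; exact Real.sqrt_pos.2 (by positivity)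
  have hlamsq : lam ^ 2 = 2 * exp 1 * L := by
    rw [hlam, sq_sqrt (by positivity)]
  rw [← hlam] at hcase
  have hkey : lam * C ≤ σ * exp 1 := by
    rw [one_div, inv_mul_eq_div, div_le_div_iff₀ (exp_pos 1) hC] at hcase
    exact hcase
  have hσ0 : 0 < σ := by nlinarith [exp_pos 1, mul_pos hlam0 hC]
  set t := lam / (σ * exp 1) with htdef
  have ht0 : 0 < t := div_pos hlam0 (mul_pos hσ0 (exp_pos 1))
  have htC : t * C ≤ 1 := by
    rw [htdef, div_mul_eq_mul_div, div_le_one (mul_pos hσ0 (exp_pos 1))]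
    exact hkey
  set V := ∑ i, ∫ ω, (X i ω) ^ 2 ∂μ with hVdef
  have hV0 : 0 ≤ V := Finset.sum_nonneg fun i _ =>
    integral_nonneg fun ω => sq_nonneg _
  have hσ2 : σ ^ 2 = V := by rw [hσ, sq_sqrt hV0]
  have hYs : Y = ∑ i, X i := by
    ext ω; rw [hY]; simp [Finset.sum_apply]
  have hYint : ∀ s : ℝ, Integrable (fun ω => exp (s * Y ω)) μ := by
    intro s
    rw [hYs]
    exact hindep.integrable_exp_mul_sum hmeas
      (fun i _ => my_exp_integrable μ (X i) (hmeas i) C (hbd i) s)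
  have hmgf : ∀ s : ℝ, |s| * C ≤ 1 → mgf Y μ s ≤ exp (s ^ 2 * exp 1 * V / 2) := by
    intro s hsC
    rw [hYs, hindep.mgf_sum hmeas]
    calc ∏ i, mgf (X i) μ s
        ≤ ∏ i, exp (s ^ 2 * exp 1 * (∫ ω, (X i ω) ^ 2 ∂μ) / 2) :=
          Finset.prod_le_prod (fun i _ => mgf_nonneg)
            (fun i _ => my_mgf_bound μ (X i) (hmeas i) C hC (hbd i) (hmean i) s hsC)
      _ = exp (∑ i, s ^ 2 * exp 1 * (∫ ω, (X i ω) ^ 2 ∂μ) / 2) := by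
          rw [← Real.exp_sum]
      _ = exp (s ^ 2 * exp 1 * V / 2) := by
          congr 1
          rw [← Finset.sum_div, ← Finset.mul_sum]
  have hE : -t * (lam * σ) + t ^ 2 * exp 1 * V / 2 = -L := by
    have hσne : σ ≠ 0 := ne_of_gt hσ0
    have hene : exp 1 ≠ 0 := (exp_pos 1).ne'
    rw [← hσ2, htdef]
    field_simp
    linear_combination (-1 : ℝ) * hlamsq
  have hexpL : exp (-L) = δ / 2 := by
    rw [exp_neg, hLdef, exp_log (by positivity), inv_div]
  have htC' : |t| * C ≤ 1 := by rwa [abs_of_nonneg ht0.le]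
  have htC'' : |(-t)| * C ≤ 1 := by rwa [abs_neg, abs_of_nonneg ht0.le]
  have hup : (μ {ω | lam * σ ≤ Y ω}).toReal ≤ δ / 2 := by
    calc (μ {ω | lam * σ ≤ Y ω}).toReal
        ≤ exp (-t * (lam * σ)) * mgf Y μ t :=
          measure_ge_le_exp_mul_mgf (lam * σ) ht0.le (hYint t)
      _ ≤ exp (-t * (lam * σ)) * exp (t ^ 2 * exp 1 * V / 2) := by
          exact mul_le_mul_of_nonneg_left (hmgf t htC') (exp_pos _).le
      _ = exp (-t * (lam * σ) + t ^ 2 * exp 1 * V / 2) := (exp_add _ _).symm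
      _ = δ / 2 := by rw [hE, hexpL]
  have hdn : (μ {ω | Y ω ≤ -(lam * σ)}).toReal ≤ δ / 2 := by
    have h1 := measure_le_le_exp_mul_mgf (X := Y) (μ := μ) (-(lam * σ))
      (neg_nonpos.2 ht0.le) (hYint (-t))
    have h2 : -(-t) * -(lam * σ) = -t * (lam * σ) := by ring
    rw [h2] at h1
    calc (μ {ω | Y ω ≤ -(lam * σ)}).toReal
        ≤ exp (-t * (lam * σ)) * mgf Y μ (-t) := h1
      _ ≤ exp (-t * (lam * σ)) * exp ((-t) ^ 2 * exp 1 * V / 2) := by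
          exact mul_le_mul_of_nonneg_left (hmgf (-t) htC'') (exp_pos _).le
      _ = exp (-t * (lam * σ) + t ^ 2 * exp 1 * V / 2) := by
          rw [← exp_add, neg_pow, neg_one_pow_eq_one_iff_even (by norm_num) |>.2 (by norm_num)]
          ring_nf
      _ = δ / 2 := by rw [hE, hexpL]
  have hsub : {ω | lam * σ ≤ |Y ω|} ⊆ {ω | lam * σ ≤ Y ω} ∪ {ω | Y ω ≤ -(lam * σ)} := by
    intro ω h
    simp only [Set.mem_setOf_eq, Set.mem_union] at h ⊢
    rcases le_abs.1 h with h | h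
    · exact Or.inl h
    · exact Or.inr (by linarith)
  calc (μ {ω | lam * σ ≤ |Y ω|}).toReal
      ≤ (μ ({ω | lam * σ ≤ Y ω} ∪ {ω | Y ω ≤ -(lam * σ)})).toReal :=
        ENNReal.toReal_mono (measure_ne_top _ _) (measure_mono hsub)
    _ ≤ (μ {ω | lam * σ ≤ Y ω}).toReal + (μ {ω | Y ω ≤ -(lam * σ)}).toReal := by
        rw [← ENNReal.toReal_add (measure_ne_top _ _) (measure_ne_top _ _)]
        exact ENNReal.toReal_mono
          (ENNReal.add_ne_top.2 ⟨measure_ne_top _ _, measure_ne_top _ _⟩)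
          (measure_union_le _ _)
    _ ≤ δ / 2 + δ / 2 := add_le_add hup hdn
    _ = δ := by ring
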